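/- Let s₁, …, s_n be pairwise distinct complex numbers with Re(s_j) > 0 for all j. Then the n×n matrix K with entries K_{jl} = 1/(s_j + conj(s_l)) is Hermitian and positive definite. -/

import Mathlib

open Matrix MeasureTheory Set
open scoped ComplexOrder

private lemma cexp_hasDerivAt' (a : ℂ) (t : ℝ) :
    HasDerivAt (fun u : ℝ => Complex.exp (-(a * u))) (-a * Complex.exp (-(a * t))) t := by
  have h1 : HasDerivAt (fun u : ℝ => (u : ℂ)) 1 t := Complex.ofRealCLM.hasDerivAt
  have h2 : HasDerivAt (fun u : ℝ => -(a * (u : ℂ))) (-a) t := by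
    simpa [Pi.neg_def] using (h1.const_mul a).neg
  simpa [mul_comm] using h2.cexp

private lemma cexp_integrableOn' (a : ℂ) (ha : 0 < a.re) :
    IntegrableOn (fun t : ℝ => Complex.exp (-(a * t))) (Ioi 0) := by
  have hm : AEStronglyMeasurable (fun t : ℝ => Complex.exp (-(a * t)))
      (volume.restrict (Ioi 0)) := by
    refine Continuous.aestronglyMeasurable ?_
    exact Complex.continuous_exp.comp (by continuity)
  refine (exp_neg_integrableOn_Ioi 0 ha).mono' hm ?_
  filter_upwards with t
  have : ‖Complex.exp (-(a * t))‖ = Real.exp ((-(a * (t : ℂ))).re) := by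
    simp [Complex.norm_exp]
  rw [this]
  simp [Complex.mul_re, neg_mul]

private lemma integral_cexp' (a : ℂ) (ha : 0 < a.re) :
    ∫ t : ℝ in Ioi 0, Complex.exp (-(a * t)) = 1 / a := by
  have ha0 : a ≠ 0 := by
    intro h; rw [h] at ha; simp at ha
  have htend : Filter.Tendsto (fun t : ℝ => -a⁻¹ * Complex.exp (-(a * t)))
      Filter.atTop (nhds 0) := by
    have h1 : Filter.Tendsto (fun t : ℝ => Complex.exp (-(a * t))) Filter.atTop (nhds 0) := by
      have hb : ∀ t : ℝ, ‖Complex.exp (-(a * t))‖ ≤ Real.exp (-(a.re * t)) := by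
        intro t
        have : ‖Complex.exp (-(a * t))‖ = Real.exp ((-(a * (t : ℂ))).re) := by
          simp [Complex.norm_exp]
        rw [this]
        simp [Complex.mul_re]
      have h2 : Filter.Tendsto (fun t : ℝ => a.re * t) Filter.atTop Filter.atTop :=
        Filter.Tendsto.const_mul_atTop ha Filter.tendsto_id
      have h3 : Filter.Tendsto (fun t : ℝ => Real.exp (-(a.re * t))) Filter.atTop (nhds 0) := by
        exact Real.tendsto_exp_neg_atTop_nhds_zero.comp h2
      exact squeeze_zero_norm hb h3
    simpa using h1.const_mul (-a⁻¹)
  have hderiv : ∀ t ∈ Ici (0:ℝ),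
      HasDerivAt (fun t : ℝ => -a⁻¹ * Complex.exp (-(a * t)))
        (Complex.exp (-(a * t))) t := by
    intro t _
    have := (cexp_hasDerivAt' a t).const_mul (-a⁻¹)
    have heq : -a⁻¹ * (-a * Complex.exp (-(a * t))) = Complex.exp (-(a * t)) := by
      field_simp
    rwa [heq] at this
  have key := integral_Ioi_of_hasDerivAt_of_tendsto' hderiv (cexp_integrableOn' a ha) htend
  rw [key]
  simp [one_div]

/-- If a finite linear combination of exponentials `exp (-(s j) t)` with pairwise
distinct exponents vanishes for all `t > 0`, then all coefficients vanish. -/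
private lemma sum_exp_eq_zero' {n : ℕ} (s : Fin n → ℂ) (hdist : Function.Injective s)
    (z : Fin n → ℂ)
    (h : ∀ t : ℝ, 0 < t → ∑ j, z j * Complex.exp (-(s j * t)) = 0) :
    z = 0 := by
  have claim : ∀ k : ℕ, ∀ t : ℝ, 0 < t →
      ∑ j, z j * (-(s j)) ^ k * Complex.exp (-(s j * t)) = 0 := by
    intro k
    induction k with
    | zero => intro t ht; simpa using h t ht
    | succ k ih =>
      intro t ht
      have hd : HasDerivAt
          (fun u : ℝ => ∑ j, z j * (-(s j)) ^ k * Complex.exp (-(s j * u)))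
          (∑ j, z j * (-(s j)) ^ (k+1) * Complex.exp (-(s j * t))) t := by
        have hsum := HasDerivAt.fun_sum (u := Finset.univ)
          (fun j _ => ((cexp_hasDerivAt' (s j) t).const_mul (z j * (-(s j)) ^ k)))
        convert hsum using 1
        · rfl
        refine Finset.sum_congr rfl fun j _ => ?_
        ring
      have hd0 : HasDerivAt
          (fun u : ℝ => ∑ j, z j * (-(s j)) ^ k * Complex.exp (-(s j * u)))
          0 t := by
        refine (hasDerivAt_const t (0:ℂ)).congr_of_eventuallyEq ?_
        filter_upwards [Ioi_mem_nhds ht] with u hu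
        exact ih u hu
      exact hd.unique hd0
  set w : Fin n → ℂ := fun j => z j * Complex.exp (-(s j * (1:ℝ))) with hw
  have hVw : (Matrix.vandermonde fun j => -(s j))ᵀ *ᵥ w = 0 := by
    funext k
    have hc := claim (k : ℕ) 1 one_pos
    simp only [Matrix.mulVec, dotProduct, Matrix.transpose_apply,
      Matrix.vandermonde, Matrix.of_apply, Pi.zero_apply]
    rw [← hc]
    refine Finset.sum_congr rfl fun j _ => ?_
    simp [hw]; ring
  have hdet : (Matrix.vandermonde fun j => -(s j))ᵀ.det ≠ 0 := by
    rw [Matrix.det_transpose, Matrix.det_vandermonde_ne_zero_iff]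
    exact fun i j hij => hdist (neg_injective hij)
  have hw0 : w = 0 := Matrix.eq_zero_of_mulVec_eq_zero hdet hVw
  funext j
  have := congrFun hw0 j
  simp only [hw, Pi.zero_apply] at this
  rcases mul_eq_zero.mp this with h' | h'
  · exact h'
  · exact absurd h' (Complex.exp_ne_zero _)

/-- The Cauchy matrix `(1/(s_j + conj s_l))` built from pairwise distinct complex
numbers with positive real parts is Hermitian and positive definite. -/
theorem cauchy_matrix_posDef
    {n : ℕ} (s : Fin n → ℂ)
    (hdist : Function.Injective s)
    (hre : ∀ j : Fin n, 0 < (s j).re)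
    (K : Matrix (Fin n) (Fin n) ℂ)
    (hK : ∀ j l : Fin n, K j l = 1 / (s j + (starRingEnd ℂ) (s l))) :
    K.IsHermitian ∧ K.PosDef := by
  have herm : K.IsHermitian := by
    show Kᴴ = K
    ext j l
    rw [Matrix.conjTranspose_apply, hK l j, hK j l]
    rw [show (star (1 / (s l + (starRingEnd ℂ) (s j))) : ℂ)
        = (starRingEnd ℂ) (1 / (s l + (starRingEnd ℂ) (s j))) from rfl]
    rw [map_div₀, _root_.map_one, map_add, Complex.conj_conj, add_comm]
  refine ⟨herm, Matrix.PosDef.of_dotProduct_mulVec_pos herm ?_⟩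
  intro x hx
  -- positivity of real parts of the denominators
  have hre2 : ∀ j l : Fin n, 0 < (s j + (starRingEnd ℂ) (s l)).re := by
    intro j l
    have := hre j; have := hre l
    simp only [Complex.add_re, Complex.conj_re]
    linarith
  -- the function whose squared norm we integrate
  set g : ℝ → ℂ := fun t => ∑ j, (starRingEnd ℂ) (x j) * Complex.exp (-(s j * t)) with hg
  -- the integrand, as a double sum of exponentials
  set q : ℝ → ℂ := fun t => ∑ j, ∑ l,
    (starRingEnd ℂ) (x j) * x l * Complex.exp (-((s j + (starRingEnd ℂ) (s l)) * t)) with hq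
  have hq_eq : ∀ t : ℝ, q t = (Complex.normSq (g t) : ℂ) := by
    intro t
    have hconj : (starRingEnd ℂ) (g t)
        = ∑ l, x l * Complex.exp (-((starRingEnd ℂ) (s l) * t)) := by
      rw [hg]
      rw [map_sum]
      refine Finset.sum_congr rfl fun l _ => ?_
      rw [_root_.map_mul, Complex.conj_conj, ← Complex.exp_conj]
      congr 1
      simp
    have : g t * (starRingEnd ℂ) (g t) = q t := by
      rw [hconj, hg, hq, Finset.sum_mul_sum]
      refine Finset.sum_congr rfl fun j _ => Finset.sum_congr rfl fun l _ => ?_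
      rw [show -((s j + (starRingEnd ℂ) (s l)) * (t:ℂ))
          = -(s j * t) + -((starRingEnd ℂ) (s l) * t) by ring, Complex.exp_add]
      ring
    rw [← this, Complex.mul_conj]
  -- integrability of each term
  have hterm_int : ∀ j l : Fin n, IntegrableOn
      (fun t : ℝ => (starRingEnd ℂ) (x j) * x l *
        Complex.exp (-((s j + (starRingEnd ℂ) (s l)) * t))) (Ioi 0) := by
    intro j l
    exact (cexp_integrableOn' _ (hre2 j l)).const_mul _
  have hq_int : IntegrableOn q (Ioi 0) := by
    rw [hq]
    apply integrable_finset_sum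
    intro j _
    exact integrable_finset_sum _ (fun l _ => hterm_int j l)
  -- the integral of q equals the quadratic form
  have hq_integral : ∫ t in Ioi (0:ℝ), q t = dotProduct (star x) (K *ᵥ x) := by
    rw [hq]
    rw [integral_finset_sum _ (fun j _ => integrable_finset_sum _ (fun l _ => hterm_int j l))]
    have : ∀ j : Fin n, ∫ t in Ioi (0:ℝ), ∑ l,
        (starRingEnd ℂ) (x j) * x l *
          Complex.exp (-((s j + (starRingEnd ℂ) (s l)) * t))
        = ∑ l, (starRingEnd ℂ) (x j) * x l * (1 / (s j + (starRingEnd ℂ) (s l))) := by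
      intro j
      rw [integral_finset_sum _ (fun l _ => hterm_int j l)]
      refine Finset.sum_congr rfl fun l _ => ?_
      rw [MeasureTheory.integral_const_mul, integral_cexp' _ (hre2 j l)]
    rw [Finset.sum_congr rfl fun j _ => this j]
    simp only [dotProduct, Matrix.mulVec, Pi.star_apply, RCLike.star_def]
    refine Finset.sum_congr rfl fun j _ => ?_
    rw [Finset.mul_sum]
    refine Finset.sum_congr rfl fun l _ => ?_
    rw [hK j l]
    ring
  -- the quadratic form is a nonnegative real integral
  have hreal : dotProduct (star x) (K *ᵥ x)
      = Complex.ofReal (∫ t in Ioi (0:ℝ), Complex.normSq (g t)) := by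
    rw [← hq_integral]
    rw [show (fun t : ℝ => q t) = fun t : ℝ => ((Complex.normSq (g t) : ℂ)) from
      funext hq_eq]
    exact integral_ofReal
  -- positivity of the real integral
  have hg_cont : Continuous g := by
    rw [hg]
    apply continuous_finset_sum
    intro j _
    exact continuous_const.mul (Complex.continuous_exp.comp (by continuity))
  have hex : ∃ t : ℝ, 0 < t ∧ g t ≠ 0 := by
    by_contra hc
    push_neg at hc
    have hz : (fun j => (starRingEnd ℂ) (x j)) = 0 := by
      refine sum_exp_eq_zero' s hdist _ ?_
      intro t ht
      exact hc t ht
    apply hx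
    funext j
    have := congrFun hz j
    simpa using this
  obtain ⟨t₀, ht₀, hg₀⟩ := hex
  have hint_normSq : IntegrableOn (fun t : ℝ => Complex.normSq (g t)) (Ioi 0) := by
    have : (fun t : ℝ => Complex.normSq (g t)) = fun t : ℝ => (q t).re := by
      funext t; rw [hq_eq t]; simp
    rw [this]
    exact hq_int.re
  have hpos : 0 < ∫ t in Ioi (0:ℝ), Complex.normSq (g t) := by
    rw [setIntegral_pos_iff_support_of_nonneg_ae ?_ hint_normSq]
    · have hopen : IsOpen ({t : ℝ | g t ≠ 0} ∩ Ioi 0) := by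
        refine IsOpen.inter ?_ isOpen_Ioi
        exact isOpen_compl_singleton.preimage hg_cont
      have hsub : ({t : ℝ | g t ≠ 0} ∩ Ioi 0)
          ⊆ Function.support (fun t => Complex.normSq (g t)) ∩ Ioi 0 := by
        rintro t ⟨h1, h2⟩
        refine ⟨?_, h2⟩
        simp only [Function.mem_support]
        intro hc
        exact h1 (Complex.normSq_eq_zero.mp hc)
      refine lt_of_lt_of_le ?_ (measure_mono hsub)
      exact hopen.measure_pos volume ⟨t₀, hg₀, ht₀⟩
    · filter_upwards with t
      exact Complex.normSq_nonneg _
  rw [hreal]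
  exact Complex.zero_lt_real.mpr hpos
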